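/- Let G = (V,E) be a connected graph that has no matching cut consisting of at most 2 edges. Let S, T, X, Y ⊆ V satisfy S ⊆ X, T ⊆ Y, X ∩ Y = ∅, and suppose that every vertex of V ∖ (X ∪ Y) has no neighbour in S ∪ T, at most one neighbour in X ∖ S, and at most one neighbour in Y ∖ T. Suppose further that the induced subgraph G − (X ∪ Y) is P3-free. Then for every valid red-blue colouring of G in which every vertex of X is red and every vertex of Y is blue, every connected component of G − (X ∪ Y) is monochromatic. -/

import Mathlib

/-- `M` is a matching cut of `G`: a set of edges of `G`, no two of which share an
end-vertex, whose removal disconnects `G`. -/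
def IsMatchingCut {V : Type*} (G : SimpleGraph V) (M : Set (Sym2 V)) : Prop :=
  M ⊆ G.edgeSet ∧
  (∀ e ∈ M, ∀ f ∈ M, e ≠ f → ∀ v : V, v ∈ e → v ∉ f) ∧
  ¬ (G.deleteEdges M).Connected

/-- A red-blue colouring (`true` = red, `false` = blue) is valid if every vertex has at
most one neighbour of the opposite colour and both colours are used. -/
def IsValidColoring {V : Type*} (G : SimpleGraph V) (c : V → Bool) : Prop :=
  (∀ v : V, {w : V | G.Adj v w ∧ c w ≠ c v}.Subsingleton) ∧
  (∃ u, c u = true) ∧ (∃ u, c u = false)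

/-- From an induced path on three vertices we get an embedding of `P₃`. -/
lemma p3_of_path {W : Type*} {H : SimpleGraph W} {a w b : W}
    (h1 : H.Adj a w) (h2 : H.Adj w b) (hab : a ≠ b) (hnadj : ¬ H.Adj a b) :
    Nonempty (SimpleGraph.pathGraph 3 ↪g H) := by
  have haw : a ≠ w := h1.ne
  have hwb : w ≠ b := h2.ne
  have hnadj' : ¬ H.Adj b a := fun h => hnadj h.symm
  refine ⟨⟨⟨![a, w, b], ?_⟩, ?_⟩⟩
  · intro i j hij
    fin_cases i <;> fin_cases j <;> simp_all
  · intro i j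
    change H.Adj (![a, w, b] i) (![a, w, b] j) ↔ _
    fin_cases i <;> fin_cases j <;>
      simp [SimpleGraph.pathGraph_adj, h1, h2, h1.symm, h2.symm, hnadj, hnadj', H.irrefl]

/-- A predicate closed under adjacency propagates along walks. -/
lemma walk_closed {W : Type*} {H : SimpleGraph W} (P : W → Prop)
    (hP : ∀ ⦃x z⦄, P x → H.Adj x z → P z) :
    ∀ {a b : W} (_ : H.Walk a b), P a → P b := by
  intro a b p
  induction p with
  | nil => exact id
  | cons h q ih => exact fun ha => ih (hP ha h)

/-- Let `G` be connected with no matching cut of at most two edges, let `S ⊆ X`, `T ⊆ Y`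
with `X ∩ Y = ∅` be such that every vertex outside `X ∪ Y` has no neighbour in `S ∪ T`,
at most one neighbour in `X \ S` and at most one neighbour in `Y \ T`, and suppose
`G - (X ∪ Y)` is `P₃`-free. Then in every valid red-blue colouring of `G` colouring `X`
red and `Y` blue, every connected component of `G - (X ∪ Y)` is monochromatic. -/
theorem components_monochromatic_outside_XY {V : Type*} (G : SimpleGraph V)
    (hG : G.Connected)
    (hno : ∀ e f : Sym2 V, ¬ IsMatchingCut G {e, f})
    (S T X Y : Set V) (hSX : S ⊆ X) (hTY : T ⊆ Y) (hXY : Disjoint X Y)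
    (hout : ∀ v : V, v ∉ X ∪ Y →
      (∀ w ∈ S ∪ T, ¬ G.Adj v w) ∧
      {w : V | w ∈ X \ S ∧ G.Adj v w}.Subsingleton ∧
      {w : V | w ∈ Y \ T ∧ G.Adj v w}.Subsingleton)
    (hP3 : IsEmpty (SimpleGraph.pathGraph 3 ↪g G.induce ((X ∪ Y)ᶜ : Set V)))
    (c : V → Bool) (hc : IsValidColoring G c)
    (hX : ∀ x ∈ X, c x = true) (hY : ∀ y ∈ Y, c y = false) :
    ∀ (C : (G.induce ((X ∪ Y)ᶜ : Set V)).ConnectedComponent),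
      ∀ a ∈ C.supp, ∀ b ∈ C.supp, c (a : V) = c (b : V) := by
  classical
  intro C a ha b hb
  by_contra hne
  set H := G.induce ((X ∪ Y)ᶜ : Set V) with hH
  have hre : H.Reachable a b := by
    rw [SimpleGraph.ConnectedComponent.mem_supp_iff] at ha hb
    exact SimpleGraph.ConnectedComponent.eq.mp (ha.trans hb.symm)
  -- in the P₃-free induced graph, reachable distinct vertices are adjacent
  have reach_adj : ∀ {x y : ((X ∪ Y)ᶜ : Set V)}, H.Walk x y → x = y ∨ H.Adj x y := by
    intro x y p
    induction p with
    | nil => exact Or.inl rfl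
    | @cons x m y h q ih =>
      rcases ih with rfl | h2
      · exact Or.inr h
      · by_cases hxy : x = y
        · exact Or.inl hxy
        · by_cases hadj : H.Adj x y
          · exact Or.inr hadj
          · obtain ⟨e⟩ := p3_of_path h h2 hxy hadj
            exact (hP3.false e).elim
  -- key : outside neighbours of one endpoint of a bichromatic edge coincide
  have key : ∀ (u v : ((X ∪ Y)ᶜ : Set V)), G.Adj ↑u ↑v → c ↑u ≠ c ↑v →
      ∀ w : ((X ∪ Y)ᶜ : Set V), G.Adj ↑u ↑w → w = v := by
    intro u v huv hcol w hw
    by_cases hwv : w = v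
    · exact hwv
    by_cases hcw : c ↑w = c ↑v
    · have : (↑w : V) = ↑v :=
        hc.1 (↑u : V) ⟨hw, by rw [hcw]; exact fun h => hcol h.symm⟩
          ⟨huv, fun h => hcol h.symm⟩
      exact absurd (Subtype.ext this) hwv
    · -- c w = c u; then w must be adjacent to v, giving two w-coloured neighbours of v
      have hwadj : G.Adj ↑w ↑v := by
        by_contra hn
        have hHadj1 : H.Adj w u := by simpa [hH, SimpleGraph.comap_adj] using hw.symm
        have hHadj2 : H.Adj u v := by simpa [hH, SimpleGraph.comap_adj] using huv
        have hn' : ¬ H.Adj w v := by simpa [hH, SimpleGraph.comap_adj] using hn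
        obtain ⟨e⟩ := p3_of_path hHadj1 hHadj2 hwv hn'
        exact (hP3.false e).elim
      have boolNe : ∀ x y : Bool, x ≠ y → x = !y := by decide
      have hcwu : c ↑w = c ↑u := by
        rw [boolNe _ _ hcw, boolNe _ _ hcol]
      have : (↑w : V) = ↑u :=
        hc.1 (↑v : V) ⟨hwadj.symm, by rw [hcwu]; exact hcol⟩ ⟨huv.symm, hcol⟩
      exact absurd this hw.ne'
  -- reduce to a red-blue adjacent pair outside X ∪ Y
  have main : ∀ (u v : ((X ∪ Y)ᶜ : Set V)), G.Adj ↑u ↑v →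
      c ↑u = true → c ↑v = false → False := by
    intro u v huv hcu hcv
    have hcuv : c ↑u ≠ c ↑v := by rw [hcu, hcv]; simp
    have hu2 : (↑u : V) ∉ X ∪ Y := u.2
    have hv2 : (↑v : V) ∉ X ∪ Y := v.2
    obtain ⟨huS, huX1, _⟩ := hout ↑u hu2
    obtain ⟨hvS, _, hvY1⟩ := hout ↑v hv2
    -- neighbours of u
    have nbrU : ∀ z : V, G.Adj ↑u z → z = ↑v ∨ z ∈ X \ S := by
      intro z hz
      by_cases hzXY : z ∈ X ∪ Y
      · rcases hzXY with hzX | hzY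
        · by_cases hzS : z ∈ S
          · exact absurd hz (huS z (Or.inl hzS))
          · exact Or.inr ⟨hzX, hzS⟩
        · left
          exact hc.1 (↑u : V) ⟨hz, by rw [hY z hzY, hcu]; simp⟩
            ⟨huv, by rw [hcv, hcu]; simp⟩
      · left
        exact congrArg Subtype.val (key u v huv hcuv ⟨z, hzXY⟩ hz)
    -- neighbours of v
    have nbrV : ∀ z : V, G.Adj ↑v z → z = ↑u ∨ z ∈ Y \ T := by
      intro z hz
      by_cases hzXY : z ∈ X ∪ Y
      · rcases hzXY with hzX | hzY
        · left
          exact hc.1 (↑v : V) ⟨hz, by rw [hX z hzX, hcv]; simp⟩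
            ⟨huv.symm, by rw [hcv, hcu]; simp⟩
        · by_cases hzT : z ∈ T
          · exact absurd hz (hvS z (Or.inr hzT))
          · exact Or.inr ⟨hzY, hzT⟩
      · left
        exact congrArg Subtype.val (key v u huv.symm hcuv.symm ⟨z, hzXY⟩ hz)
    -- generic disconnection principle
    have hdel : ∀ (M : Set (Sym2 V)),
        (∀ z, G.Adj ↑u z → s(↑u, z) ∉ M → z = ↑v) →
        (∀ z, G.Adj ↑v z → s(↑v, z) ∉ M → z = ↑u) →
        ∀ t : V, t ≠ ↑u → t ≠ ↑v → ¬ (G.deleteEdges M).Connected := by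
      intro M hU hV t ht1 ht2 hcon
      obtain ⟨p⟩ := hcon.preconnected ↑u t
      have hfin : t = ↑u ∨ t = ↑v := by
        refine walk_closed (H := G.deleteEdges M) (fun w => w = ↑u ∨ w = ↑v) ?_ p
          (Or.inl rfl)
        intro x z hx hz
        rw [SimpleGraph.deleteEdges_adj] at hz
        rcases hx with rfl | rfl
        · exact Or.inr (hU z hz.1 hz.2)
        · exact Or.inl (hV z hz.1 hz.2)
      rcases hfin with h | h
      · exact ht1 h
      · exact ht2 h
    -- distinctness facts
    have hxny : ∀ x' ∈ X, ∀ y' ∈ Y, x' ≠ y' := by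
      intro x' hx' y' hy' h
      exact (Set.disjoint_left.mp hXY hx') (h ▸ hy')
    have hXu : ∀ x' ∈ X, x' ≠ ↑u := fun x' hx' h => hu2 (h ▸ Or.inl hx')
    have hXv : ∀ x' ∈ X, x' ≠ ↑v := fun x' hx' h => hv2 (h ▸ Or.inl hx')
    have hYu : ∀ y' ∈ Y, y' ≠ ↑u := fun y' hy' h => hu2 (h ▸ Or.inr hy')
    have hYv : ∀ y' ∈ Y, y' ≠ ↑v := fun y' hy' h => hv2 (h ▸ Or.inr hy')
    by_cases hxE : {w | w ∈ X \ S ∧ G.Adj ↑u w}.Nonempty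
    · obtain ⟨x, hx⟩ := hxE
      have hUgen : ∀ z, G.Adj ↑u z → z ≠ x → z = ↑v := by
        intro z hz hzx
        rcases nbrU z hz with h | h
        · exact h
        · exact absurd (huX1 ⟨h, hz⟩ hx) hzx
      by_cases hyE : {w | w ∈ Y \ T ∧ G.Adj ↑v w}.Nonempty
      · -- two-edge matching cut {uv-side x, vy-side y}
        obtain ⟨y, hy⟩ := hyE
        have hVgen : ∀ z, G.Adj ↑v z → z ≠ y → z = ↑u := by
          intro z hz hzy
          rcases nbrV z hz with h | h
          · exact h
          · exact absurd (hvY1 ⟨h, hz⟩ hy) hzy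
        refine hno s(↑u, x) s(↑v, y) ⟨?_, ?_, ?_⟩
        · intro e he
          simp only [Set.mem_insert_iff, Set.mem_singleton_iff] at he
          rcases he with rfl | rfl
          · exact G.mem_edgeSet.mpr hx.2
          · exact G.mem_edgeSet.mpr hy.2
        · intro e he f hf hef z hze hzf
          simp only [Set.mem_insert_iff, Set.mem_singleton_iff] at he hf
          rcases he with rfl | rfl <;> rcases hf with rfl | rfl
          · exact hef rfl
          · rw [Sym2.mem_iff] at hze hzf
            rcases hze with h1 | h1 <;> rcases hzf with h2 | h2
            · exact huv.ne (h1.symm.trans h2)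
            · exact hYu y hy.1.1 (h2.symm.trans h1)
            · exact hXv x hx.1.1 (h1.symm.trans h2)
            · exact hxny x hx.1.1 y hy.1.1 (h1.symm.trans h2)
          · rw [Sym2.mem_iff] at hze hzf
            rcases hze with h1 | h1 <;> rcases hzf with h2 | h2
            · exact huv.ne' (h1.symm.trans h2)
            · exact hXv x hx.1.1 (h2.symm.trans h1)
            · exact hYu y hy.1.1 (h1.symm.trans h2)
            · exact hxny x hx.1.1 y hy.1.1 (h2.symm.trans h1)
          · exact hef rfl
        · refine hdel _ ?_ ?_ x (hXu x hx.1.1) (hXv x hx.1.1)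
          · intro z hz hzM
            refine hUgen z hz fun h => hzM ?_
            rw [h]; exact Set.mem_insert _ _
          · intro z hz hzM
            refine hVgen z hz fun h => hzM ?_
            rw [h]; exact Set.mem_insert_of_mem _ rfl
      · -- single-edge matching cut at x
        have hVgen : ∀ z, G.Adj ↑v z → z = ↑u := by
          intro z hz
          rcases nbrV z hz with h | h
          · exact h
          · exact absurd ⟨z, h, hz⟩ hyE
        refine hno s(↑u, x) s(↑u, x) ⟨?_, ?_, ?_⟩
        · intro e he
          simp only [Set.mem_insert_iff, Set.mem_singleton_iff, or_self] at he
          subst he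
          exact G.mem_edgeSet.mpr hx.2
        · intro e he f hf hef z hze hzf
          simp only [Set.mem_insert_iff, Set.mem_singleton_iff, or_self] at he hf
          subst he; subst hf
          exact hef rfl
        · refine hdel _ ?_ ?_ x (hXu x hx.1.1) (hXv x hx.1.1)
          · intro z hz hzM
            refine hUgen z hz fun h => hzM ?_
            rw [h]; exact Set.mem_insert _ _
          · intro z hz _
            exact hVgen z hz
    · have hUgen : ∀ z, G.Adj ↑u z → z = ↑v := by
        intro z hz
        rcases nbrU z hz with h | h
        · exact h
        · exact absurd ⟨z, h, hz⟩ hxE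
      by_cases hyE : {w | w ∈ Y \ T ∧ G.Adj ↑v w}.Nonempty
      · -- single-edge matching cut at y
        obtain ⟨y, hy⟩ := hyE
        have hVgen : ∀ z, G.Adj ↑v z → z ≠ y → z = ↑u := by
          intro z hz hzy
          rcases nbrV z hz with h | h
          · exact h
          · exact absurd (hvY1 ⟨h, hz⟩ hy) hzy
        refine hno s(↑v, y) s(↑v, y) ⟨?_, ?_, ?_⟩
        · intro e he
          simp only [Set.mem_insert_iff, Set.mem_singleton_iff, or_self] at he
          subst he
          exact G.mem_edgeSet.mpr hy.2
        · intro e he f hf hef z hze hzf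
          simp only [Set.mem_insert_iff, Set.mem_singleton_iff, or_self] at he hf
          subst he; subst hf
          exact hef rfl
        · refine hdel _ ?_ ?_ y (hYu y hy.1.1) (hYv y hy.1.1)
          · intro z hz _
            exact hUgen z hz
          · intro z hz hzM
            refine hVgen z hz fun h => hzM ?_
            rw [h]; exact Set.mem_insert _ _
      · -- the edge uv itself is a matching cut
        have hVgen : ∀ z, G.Adj ↑v z → z = ↑u := by
          intro z hz
          rcases nbrV z hz with h | h
          · exact h
          · exact absurd ⟨z, h, hz⟩ hyE
        refine hno s(↑u, ↑v) s(↑u, ↑v) ⟨?_, ?_, ?_⟩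
        · intro e he
          simp only [Set.mem_insert_iff, Set.mem_singleton_iff, or_self] at he
          subst he
          exact G.mem_edgeSet.mpr huv
        · intro e he f hf hef z hze hzf
          simp only [Set.mem_insert_iff, Set.mem_singleton_iff, or_self] at he hf
          subst he; subst hf
          exact hef rfl
        · intro hcon
          obtain ⟨p⟩ := hcon.preconnected ↑u ↑v
          have hfin : (↑v : V) = ↑u := by
            refine walk_closed (H := G.deleteEdges _) (fun w => w = ↑u) ?_ p rfl
            intro xx z hxx hz
            subst hxx
            rw [SimpleGraph.deleteEdges_adj] at hz
            have hz1 : z = ↑v := hUgen z hz.1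
            subst hz1
            exact absurd (Set.mem_insert _ _) hz.2
          exact huv.ne hfin.symm
  -- finish: orient the bichromatic adjacent pair
  have hab : a ≠ b := fun h => hne (h ▸ rfl)
  obtain ⟨p⟩ := hre
  have hadjH : H.Adj a b := by
    rcases reach_adj p with h | h
    · exact absurd h hab
    · exact h
  have hadj : G.Adj ↑a ↑b := by simpa [hH, SimpleGraph.comap_adj] using hadjH
  cases hca : c (↑a : V)
  · cases hcb : c (↑b : V)
    · exact hne (by rw [hca, hcb])
    · exact main b a hadj.symm hcb hca
  · cases hcb : c (↑b : V)
    · exact main a b hadj hca hcb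
    · exact hne (by rw [hca, hcb])
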